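/- Let q ∈ ℂ and k ∈ ℤ. On the open set of pairs (z, n) ∈ ℝ_{>0} × ℝ with z − n − 1/2 not an integer, define Φ(z, n) := exp((n − z)·log z + z) · Σ_{l=0}^{∞} (q^l / l!) · Γ(z − n + k − 1/2 − l) (the series converges absolutely). Then at every such point Φ has partial derivatives with respect to z and with respect to n, and (n/z)·Φ(z, n) = (∂Φ/∂z)(z, n) + (∂Φ/∂n)(z, n). -/

import Mathlib

open Finset

noncomputable def Sfun (q : ℂ) : ℂ → ℂ :=
  fun w => ∑' l : ℕ, q ^ l / (l.factorial : ℂ) * Complex.Gamma (w - l)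

noncomputable def Pprod (l : ℕ) (w : ℂ) : ℂ :=
  ∏ j ∈ Finset.range l, (w - ((j : ℂ) + 1))

lemma summable_nat_mul_pow_div_factorial (r : ℝ) :
    Summable (fun l : ℕ => (l : ℝ) * r ^ l / l.factorial) := by
  refine (summable_nat_add_iff 1).mp ?_
  refine ((Real.summable_pow_div_factorial r).mul_left r).congr fun l => ?_
  have h1 : ((l + 1).factorial : ℝ) = (l + 1) * l.factorial := by
    rw [Nat.factorial_succ]; push_cast; ring
  have h2 : ((l : ℝ) + 1) ≠ 0 := by positivity
  have h3 : (l.factorial : ℝ) ≠ 0 := Nat.cast_ne_zero.mpr l.factorial_ne_zero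
  show r * (r ^ l / l.factorial) = ((l + 1 : ℕ) : ℝ) * r ^ (l + 1) / ((l + 1).factorial : ℝ)
  rw [h1]
  push_cast
  field_simp
  ring

lemma key (q : ℂ) (w₀ : ℂ) (δ : ℝ) (hδ : 0 < δ)
    (hw : ∀ j : ℤ, δ ≤ ‖w₀ - (j : ℂ)‖) :
    ∃ d : ℂ, HasDerivAt (Sfun q) d w₀ := by
  -- general distance estimate
  have hgen : ∀ (w : ℂ) (j : ℤ), δ - dist w w₀ ≤ ‖w - (j : ℂ)‖ := by
    intro w j
    have h1 := hw j
    have h2 : ‖w₀ - (j : ℂ)‖ ≤ ‖w₀ - w‖ + ‖w - (j : ℂ)‖ := by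
      simpa using norm_add_le (w₀ - w) (w - (j : ℂ))
    have h3 : dist w w₀ = ‖w₀ - w‖ := by rw [dist_eq_norm, norm_sub_rev]
    linarith
  have hfar : ∀ w ∈ Metric.closedBall w₀ (δ / 2), ∀ j : ℤ, δ / 2 ≤ ‖w - (j : ℂ)‖ := by
    intro w hw' j
    have := hgen w j
    have h2 : dist w w₀ ≤ δ / 2 := Metric.mem_closedBall.mp hw'
    linarith
  have hfar4 : ∀ w ∈ Metric.ball w₀ (3 * δ / 4), ∀ j : ℤ, δ / 4 ≤ ‖w - (j : ℂ)‖ := by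
    intro w hw' j
    have := hgen w j
    have h2 : dist w w₀ < 3 * δ / 4 := Metric.mem_ball.mp hw'
    linarith
  -- no poles
  have hne4 : ∀ w ∈ Metric.ball w₀ (3 * δ / 4), ∀ m : ℕ, w ≠ -(m : ℂ) := by
    intro w hw' m hcon
    have h1 := hfar4 w hw' (-m)
    rw [hcon] at h1
    have : ‖-(m : ℂ) - ((-m : ℤ) : ℂ)‖ = 0 := by push_cast; simp
    rw [this] at h1; linarith
  have hne : ∀ w ∈ Metric.closedBall w₀ (δ / 2), ∀ m : ℕ, w ≠ -(m : ℂ) := by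
    intro w hw' m
    exact hne4 w (lt_of_le_of_lt (Metric.mem_closedBall.mp hw') (by linarith)) m
  -- factors nonzero and bounded below
  have hfac : ∀ w ∈ Metric.closedBall w₀ (δ / 2), ∀ j : ℕ, δ / 2 ≤ ‖w - ((j : ℂ) + 1)‖ := by
    intro w hw' j
    have := hfar w hw' ((j : ℤ) + 1)
    have hc : (((j : ℤ) + 1 : ℤ) : ℂ) = (j : ℂ) + 1 := by push_cast; ring
    rwa [hc] at this
  have hfacne : ∀ w ∈ Metric.closedBall w₀ (δ / 2), ∀ j : ℕ, w - ((j : ℂ) + 1) ≠ 0 := by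
    intro w hw' j hcon
    have := hfac w hw' j
    rw [hcon, norm_zero] at this; linarith
  have hPne : ∀ w ∈ Metric.closedBall w₀ (δ / 2), ∀ l : ℕ, Pprod l w ≠ 0 := by
    intro w hw' l
    exact Finset.prod_ne_zero_iff.mpr fun j _ => hfacne w hw' j
  have hPbound : ∀ w ∈ Metric.closedBall w₀ (δ / 2), ∀ l : ℕ, (δ / 2) ^ l ≤ ‖Pprod l w‖ := by
    intro w hw' l
    rw [Pprod, norm_prod]
    calc (δ / 2) ^ l = ∏ _j ∈ Finset.range l, (δ / 2) := by
          rw [Finset.prod_const, Finset.card_range]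
      _ ≤ ∏ j ∈ Finset.range l, ‖w - ((j : ℂ) + 1)‖ :=
          Finset.prod_le_prod (fun _ _ => by positivity) (fun j _ => hfac w hw' j)
  -- Gamma recurrence identity
  have hGeq : ∀ w ∈ Metric.closedBall w₀ (δ / 2), ∀ l : ℕ,
      Complex.Gamma (w - l) = Complex.Gamma w / Pprod l w := by
    intro w hw' l
    induction l with
    | zero =>
      simp only [Pprod, Finset.range_zero, Finset.prod_empty, Nat.cast_zero, sub_zero, div_one]
    | succ l ih =>
      have hP : Pprod (l + 1) w = Pprod l w * (w - ((l : ℂ) + 1)) := by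
        rw [Pprod, Pprod, Finset.prod_range_succ]
      have hs : w - ((l : ℂ) + 1) ≠ 0 := hfacne w hw' l
      have hrec := Complex.Gamma_add_one (w - ((l : ℂ) + 1)) hs
      have harg : w - ((l : ℂ) + 1) + 1 = w - l := by ring
      rw [harg] at hrec
      have hcast : ((l + 1 : ℕ) : ℂ) = (l : ℂ) + 1 := by push_cast; ring
      rw [hcast, hP]
      rw [ih] at hrec
      have hPl : Pprod l w ≠ 0 := Finset.prod_ne_zero_iff.mpr fun j _ => hfacne w hw' j
      rw [eq_div_iff (mul_ne_zero hPl hs)]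
      rw [div_eq_iff hPl] at hrec
      linear_combination -hrec
  -- bounds for Gamma and its derivative
  have hsub : Metric.closedBall w₀ (δ / 2) ⊆ Metric.ball w₀ (3 * δ / 4) :=
    Metric.closedBall_subset_ball (by linarith)
  have hdiffU : DifferentiableOn ℂ Complex.Gamma (Metric.ball w₀ (3 * δ / 4)) :=
    fun w hw' => (Complex.differentiableAt_Gamma w (hne4 w hw')).differentiableWithinAt
  have hA : AnalyticOnNhd ℂ Complex.Gamma (Metric.ball w₀ (3 * δ / 4)) :=
    hdiffU.analyticOnNhd Metric.isOpen_ball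
  obtain ⟨M, hM⟩ := (isCompact_closedBall w₀ (δ / 2)).exists_bound_of_continuousOn
    (hA.continuousOn.mono hsub)
  obtain ⟨M', hM'⟩ := (isCompact_closedBall w₀ (δ / 2)).exists_bound_of_continuousOn
    ((hA.deriv).continuousOn.mono hsub)
  have hw₀mem : w₀ ∈ Metric.closedBall w₀ (δ / 2) := Metric.mem_closedBall_self (by positivity)
  have hM0 : 0 ≤ M := le_trans (norm_nonneg _) (hM w₀ hw₀mem)
  have hM'0 : 0 ≤ M' := le_trans (norm_nonneg _) (hM' w₀ hw₀mem)
  -- the series of derivatives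
  set dP : ℕ → ℂ → ℂ := fun l w =>
    ∑ j ∈ Finset.range l, ∏ i ∈ (Finset.range l).erase j, (w - ((i : ℂ) + 1)) with hdP
  set g' : ℕ → ℂ → ℂ := fun l w => q ^ l / (l.factorial : ℂ) *
    ((deriv Complex.Gamma w * Pprod l w - Complex.Gamma w * dP l w) / Pprod l w ^ 2) with hg'def
  have hg : ∀ (l : ℕ), ∀ w ∈ Metric.ball w₀ (δ / 2),
      HasDerivAt (fun w => q ^ l / (l.factorial : ℂ) * Complex.Gamma (w - l)) (g' l w) w := by
    intro l w hw'
    have hwc : w ∈ Metric.closedBall w₀ (δ / 2) := Metric.ball_subset_closedBall hw'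
    have h1 : HasDerivAt Complex.Gamma (deriv Complex.Gamma w) w :=
      (Complex.differentiableAt_Gamma w (hne w hwc)).hasDerivAt
    have h2 : HasDerivAt (fun w => Pprod l w) (dP l w) w := by
      have := HasDerivAt.fun_finsetProd (u := Finset.range l)
        (f := fun j w => w - ((j : ℂ) + 1)) (f' := fun _ => 1) (x := w)
        (fun j _ => (hasDerivAt_id w).sub_const _)
      simpa [Pprod, hdP] using this
    have h3 := h1.div h2 (hPne w hwc l)
    have h4 := h3.const_mul (q ^ l / (l.factorial : ℂ))
    apply h4.congr_of_eventuallyEq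
    filter_upwards [Metric.isOpen_ball.mem_nhds hw'] with y hy
    rw [hGeq y (Metric.ball_subset_closedBall hy) l]
    rfl
  set u : ℕ → ℝ := fun l => ‖q‖ ^ l / l.factorial * ((M' + M * l * (2 / δ)) * (2 / δ) ^ l)
    with hudef
  have hu : Summable u := by
    have he : u = fun (l : ℕ) => M' * ((2 / δ * ‖q‖) ^ l / (l.factorial : ℝ)) +
        (M * (2 / δ)) * ((l : ℝ) * (2 / δ * ‖q‖) ^ l / (l.factorial : ℝ)) := by
      funext l
      have h3 : (l.factorial : ℝ) ≠ 0 := Nat.cast_ne_zero.mpr l.factorial_ne_zero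
      rw [hudef]
      rw [mul_pow]
      field_simp
    rw [he]
    exact ((Real.summable_pow_div_factorial _).mul_left M').add
      ((summable_nat_mul_pow_div_factorial _).mul_left (M * (2 / δ)))
  have hgb : ∀ (l : ℕ), ∀ w ∈ Metric.ball w₀ (δ / 2), ‖g' l w‖ ≤ u l := by
    intro l w hw'
    have hwc : w ∈ Metric.closedBall w₀ (δ / 2) := Metric.ball_subset_closedBall hw'
    have hP0 : (0:ℝ) < ‖Pprod l w‖ :=
      lt_of_lt_of_le (by positivity) (hPbound w hwc l)
    -- bound on dP
    have hdPb : ‖dP l w‖ ≤ l * (2 / δ * ‖Pprod l w‖) := by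
      rw [hdP]
      refine le_trans (norm_sum_le _ _) ?_
      have hterm : ∀ j ∈ Finset.range l,
          ‖∏ i ∈ (Finset.range l).erase j, (w - ((i : ℂ) + 1))‖ ≤ 2 / δ * ‖Pprod l w‖ := by
        intro j hj
        have hmul : (∏ i ∈ (Finset.range l).erase j, (w - ((i : ℂ) + 1))) * (w - ((j : ℂ) + 1))
            = Pprod l w := Finset.prod_erase_mul _ _ hj
        have hnj : δ / 2 ≤ ‖w - ((j : ℂ) + 1)‖ := hfac w hwc j
        have hnj0 : (0:ℝ) < ‖w - ((j : ℂ) + 1)‖ := lt_of_lt_of_le (by positivity) hnj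
        have heq : ‖∏ i ∈ (Finset.range l).erase j, (w - ((i : ℂ) + 1))‖
            = ‖Pprod l w‖ / ‖w - ((j : ℂ) + 1)‖ := by
          rw [eq_div_iff hnj0.ne', ← norm_mul, hmul]
        rw [heq]
        rw [div_le_iff₀ hnj0]
        calc ‖Pprod l w‖ = 2 / δ * ‖Pprod l w‖ * (δ / 2) := by field_simp
          _ ≤ 2 / δ * ‖Pprod l w‖ * ‖w - ((j : ℂ) + 1)‖ := by
              apply mul_le_mul_of_nonneg_left hnj; positivity
      calc (∑ j ∈ Finset.range l, ‖∏ i ∈ (Finset.range l).erase j, (w - ((i : ℂ) + 1))‖)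
          ≤ ∑ _j ∈ Finset.range l, (2 / δ * ‖Pprod l w‖) := Finset.sum_le_sum hterm
        _ = l * (2 / δ * ‖Pprod l w‖) := by rw [Finset.sum_const, Finset.card_range]; simp
    have hnum : ‖deriv Complex.Gamma w * Pprod l w - Complex.Gamma w * dP l w‖
        ≤ (M' + M * l * (2 / δ)) * ‖Pprod l w‖ := by
      refine le_trans (norm_sub_le _ _) ?_
      rw [norm_mul, norm_mul]
      have h1 : ‖deriv Complex.Gamma w‖ * ‖Pprod l w‖ ≤ M' * ‖Pprod l w‖ :=
        mul_le_mul_of_nonneg_right (hM' w hwc) hP0.le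
      have h2 : ‖Complex.Gamma w‖ * ‖dP l w‖ ≤ M * (l * (2 / δ * ‖Pprod l w‖)) :=
        mul_le_mul (hM w hwc) hdPb (norm_nonneg _) hM0
      calc ‖deriv Complex.Gamma w‖ * ‖Pprod l w‖ + ‖Complex.Gamma w‖ * ‖dP l w‖
          ≤ M' * ‖Pprod l w‖ + M * (l * (2 / δ * ‖Pprod l w‖)) := add_le_add h1 h2
        _ = (M' + M * l * (2 / δ)) * ‖Pprod l w‖ := by ring
    have hinv : 1 / ‖Pprod l w‖ ≤ (2 / δ) ^ l := by
      rw [div_le_iff₀ hP0]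
      calc (1:ℝ) = (2 / δ) ^ l * (δ / 2) ^ l := by
            rw [← mul_pow]; field_simp; simp
        _ ≤ (2 / δ) ^ l * ‖Pprod l w‖ := by
            apply mul_le_mul_of_nonneg_left (hPbound w hwc l); positivity
    have hqnorm : ‖q ^ l / (l.factorial : ℂ)‖ = ‖q‖ ^ l / l.factorial := by
      rw [norm_div, norm_pow]
      norm_num
    rw [hg'def]
    simp only []
    rw [norm_mul, hqnorm, norm_div, norm_pow]
    rw [hudef]
    have hfact0 : (0:ℝ) ≤ ‖q‖ ^ l / l.factorial := by positivity
    apply mul_le_mul_of_nonneg_left _ hfact0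
    rw [div_le_iff₀ (by positivity : (0:ℝ) < ‖Pprod l w‖ ^ 2)]
    calc ‖deriv Complex.Gamma w * Pprod l w - Complex.Gamma w * dP l w‖
        ≤ (M' + M * l * (2 / δ)) * ‖Pprod l w‖ := hnum
      _ ≤ (M' + M * l * (2 / δ)) * ((2 / δ) ^ l * ‖Pprod l w‖ ^ 2) := by
          apply mul_le_mul_of_nonneg_left _ (by positivity)
          have h0 := mul_le_mul_of_nonneg_right hinv (sq_nonneg ‖Pprod l w‖)
          have he2 : 1 / ‖Pprod l w‖ * ‖Pprod l w‖ ^ 2 = ‖Pprod l w‖ := by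
            rw [sq]; field_simp
          rw [he2] at h0
          exact h0
      _ = (M' + M * l * (2 / δ)) * (2 / δ) ^ l * ‖Pprod l w‖ ^ 2 := by ring
  have hg0 : Summable (fun l : ℕ => q ^ l / (l.factorial : ℂ) * Complex.Gamma (w₀ - l)) := by
    apply Summable.of_norm_bounded (g := fun l : ℕ => M * ((2 / δ * ‖q‖) ^ l / (l.factorial : ℝ)))
      ((Real.summable_pow_div_factorial _).mul_left M)
    intro l
    rw [norm_mul, hGeq w₀ hw₀mem l]
    have hqnorm : ‖q ^ l / (l.factorial : ℂ)‖ = ‖q‖ ^ l / l.factorial := by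
      rw [norm_div, norm_pow]; norm_num
    rw [hqnorm, norm_div]
    have hP0 : (0:ℝ) < ‖Pprod l w₀‖ :=
      lt_of_lt_of_le (by positivity) (hPbound w₀ hw₀mem l)
    have h1 : ‖Complex.Gamma w₀‖ / ‖Pprod l w₀‖ ≤ M * (2 / δ) ^ l := by
      rw [div_le_iff₀ hP0]
      calc ‖Complex.Gamma w₀‖ ≤ M := hM w₀ hw₀mem
        _ = M * ((2 / δ) ^ l * (δ / 2) ^ l) := by rw [← mul_pow]; field_simp; simp
        _ ≤ M * ((2 / δ) ^ l * ‖Pprod l w₀‖) := by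
            apply mul_le_mul_of_nonneg_left _ hM0
            apply mul_le_mul_of_nonneg_left (hPbound w₀ hw₀mem l) (by positivity)
        _ = M * (2 / δ) ^ l * ‖Pprod l w₀‖ := by ring
    calc ‖q‖ ^ l / l.factorial * (‖Complex.Gamma w₀‖ / ‖Pprod l w₀‖)
        ≤ ‖q‖ ^ l / l.factorial * (M * (2 / δ) ^ l) := by
          apply mul_le_mul_of_nonneg_left h1 (by positivity)
      _ = M * ((2 / δ * ‖q‖) ^ l / l.factorial) := by rw [mul_pow]; field_simp
  refine ⟨∑' l : ℕ, g' l w₀, ?_⟩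
  have := hasDerivAt_tsum_of_isPreconnected hu Metric.isOpen_ball
    (convex_ball w₀ (δ / 2)).isPreconnected
    (fun l y hy => hg l y hy) (fun l y hy => hgb l y hy)
    (Metric.mem_ball_self (by positivity)) hg0 (Metric.mem_ball_self (by positivity))
  exact this

/-- The string equation `(n/z − ∂/∂z − ∂/∂n)Φ = 0` for the basis vector
`Φ(z,n) = e^{(n−z)log z + z} Σ_{l≥0}(q^l/l!)Γ(z−n+k−1/2−l)`. -/
theorem stmt7 (q : ℂ) (k : ℤ) (z n : ℝ) (hz : 0 < z)
    (h : ∀ m : ℤ, z - n - 1/2 ≠ (m : ℝ))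
    (Φ : ℝ → ℝ → ℂ)
    (hΦ : ∀ x m : ℝ, Φ x m =
      (Real.exp ((m - x) * Real.log x + x) : ℂ) *
        ∑' l : ℕ, q ^ l / (l.factorial : ℂ) *
          Complex.Gamma ((x : ℂ) - (m : ℂ) + (k : ℂ) - 1/2 - (l : ℂ))) :
    ∃ dz dn : ℂ,
      HasDerivAt (fun x => Φ x n) dz z ∧
      HasDerivAt (fun m => Φ z m) dn n ∧
      ((n : ℂ) / (z : ℂ)) * Φ z n = dz + dn := by
  set w₀ : ℝ := z - n + (k : ℝ) - 1/2 with hw₀def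
  have hnotint : ∀ j : ℤ, w₀ ≠ (j : ℝ) := by
    intro j hcon
    apply h (j - k)
    push_cast
    rw [hw₀def] at hcon
    linarith
  set δ : ℝ := min (Int.fract w₀) (1 - Int.fract w₀) with hδdef
  have hfr0 : 0 < Int.fract w₀ := Int.fract_pos.mpr (hnotint ⌊w₀⌋)
  have hfr1 : Int.fract w₀ < 1 := Int.fract_lt_one w₀
  have hδ : 0 < δ := lt_min hfr0 (by linarith)
  have hdist : ∀ j : ℤ, δ ≤ |w₀ - (j : ℝ)| := by
    intro j
    rcases le_or_gt (j : ℝ) (⌊w₀⌋ : ℝ) with hj | hj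
    · have h1 : Int.fract w₀ ≤ w₀ - j := by
        rw [← Int.self_sub_floor]; linarith
      rw [abs_of_nonneg (by have := min_le_left (Int.fract w₀) (1 - Int.fract w₀); linarith)]
      exact le_trans (min_le_left _ _) h1
    · have hj' : (⌊w₀⌋ : ℝ) + 1 ≤ (j : ℝ) := by
        have : ⌊w₀⌋ + 1 ≤ j := by exact_mod_cast Int.lt_iff_add_one_le.mp (by exact_mod_cast hj)
        exact_mod_cast this
      have h1 : 1 - Int.fract w₀ ≤ (j : ℝ) - w₀ := by
        have := Int.self_sub_floor w₀
        linarith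
      rw [abs_sub_comm, abs_of_nonneg (by
        have := min_le_right (Int.fract w₀) (1 - Int.fract w₀); linarith)]
      exact le_trans (min_le_right _ _) h1
  have hdistC : ∀ j : ℤ, δ ≤ ‖((w₀ : ℝ) : ℂ) - (j : ℂ)‖ := by
    intro j
    have : ((w₀ : ℝ) : ℂ) - (j : ℂ) = ((w₀ - j : ℝ) : ℂ) := by push_cast; ring
    rw [this, Complex.norm_real, Real.norm_eq_abs]
    exact hdist j
  obtain ⟨d, hd⟩ := key q ((w₀ : ℝ) : ℂ) δ hδ hdistC
  -- derivative in z direction of the series part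
  have harg : (z : ℂ) - (n : ℂ) + (k : ℂ) - 1/2 = ((w₀ : ℝ) : ℂ) := by
    rw [hw₀def]; push_cast; ring
  have hS1 : HasDerivAt (fun x : ℝ => Sfun q ((x : ℂ) - (n : ℂ) + (k : ℂ) - 1/2)) d z := by
    have hd' : HasDerivAt (Sfun q) d ((z : ℂ) - (n : ℂ) + (k : ℂ) - 1/2) := by
      rw [harg]; exact hd
    have hin : HasDerivAt (fun w : ℂ => w - (n : ℂ) + (k : ℂ) - 1/2) 1 ((z : ℂ)) := by
      simpa using (((hasDerivAt_id ((z : ℂ))).sub_const ((n : ℂ))).add_const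
        ((k : ℂ))).sub_const (1/2 : ℂ)
    have hcomp := HasDerivAt.comp ((z : ℂ)) hd' hin
    have : HasDerivAt (fun w : ℂ => Sfun q (w - (n : ℂ) + (k : ℂ) - 1/2)) d ((z : ℂ)) := by
      simpa [Function.comp_def] using hcomp
    exact this.comp_ofReal
  have hS2 : HasDerivAt (fun m : ℝ => Sfun q ((z : ℂ) - (m : ℂ) + (k : ℂ) - 1/2)) (-d) n := by
    have hd' : HasDerivAt (Sfun q) d ((z : ℂ) - (n : ℂ) + (k : ℂ) - 1/2) := by
      rw [harg]; exact hd
    have hin : HasDerivAt (fun w : ℂ => (z : ℂ) - w + (k : ℂ) - 1/2) (-1) ((n : ℂ)) := by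
      simpa using (((hasDerivAt_id ((n : ℂ))).const_sub ((z : ℂ))).add_const
        ((k : ℂ))).sub_const (1/2 : ℂ)
    have hcomp := HasDerivAt.comp ((n : ℂ)) hd' hin
    have : HasDerivAt (fun w : ℂ => Sfun q ((z : ℂ) - w + (k : ℂ) - 1/2)) (-d) ((n : ℂ)) := by
      have hc : d * (-1) = -d := by ring
      rw [← hc]
      simpa [Function.comp_def] using hcomp
    exact this.comp_ofReal
  -- exponential parts
  set E : ℝ := (n - z) * Real.log z + z with hEdef
  have hh1 : HasDerivAt (fun x : ℝ => (n - x) * Real.log x + x) (n / z - Real.log z) z := by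
    have h1 : HasDerivAt (fun x : ℝ => n - x) (-1) z := (hasDerivAt_id z).const_sub n
    have h2 : HasDerivAt Real.log z⁻¹ z := Real.hasDerivAt_log hz.ne'
    have h3 := (h1.mul h2).add (hasDerivAt_id z)
    have he : -1 * Real.log z + (n - z) * z⁻¹ + 1 = n / z - Real.log z := by
      field_simp
      ring
    rw [← he]
    exact h3
  have hE1 : HasDerivAt (fun x : ℝ => ((Real.exp ((n - x) * Real.log x + x) : ℝ) : ℂ))
      ((Real.exp E * (n / z - Real.log z) : ℝ) : ℂ) z := by
    have := (hh1.exp).ofReal_comp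
    simpa [hEdef, mul_comm] using this
  have hh2 : HasDerivAt (fun m : ℝ => (m - z) * Real.log z + z) (Real.log z) n := by
    have h1 : HasDerivAt (fun m : ℝ => m - z) 1 n := (hasDerivAt_id n).sub_const z
    have h2 := (h1.mul_const (Real.log z)).add_const z
    simpa using h2
  have hE2 : HasDerivAt (fun m : ℝ => ((Real.exp ((m - z) * Real.log z + z) : ℝ) : ℂ))
      ((Real.exp E * Real.log z : ℝ) : ℂ) n := by
    have := (hh2.exp).ofReal_comp
    simpa [hEdef] using this
  -- assemble
  have hfun1 : (fun x : ℝ => Φ x n) = fun x : ℝ =>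
      ((Real.exp ((n - x) * Real.log x + x) : ℝ) : ℂ) *
        Sfun q ((x : ℂ) - (n : ℂ) + (k : ℂ) - 1/2) := by
    funext x
    rw [hΦ x n]
    rfl
  have hfun2 : (fun m : ℝ => Φ z m) = fun m : ℝ =>
      ((Real.exp ((m - z) * Real.log z + z) : ℝ) : ℂ) *
        Sfun q ((z : ℂ) - (m : ℂ) + (k : ℂ) - 1/2) := by
    funext m
    rw [hΦ z m]
    rfl
  set S₀ : ℂ := Sfun q ((z : ℂ) - (n : ℂ) + (k : ℂ) - 1/2) with hS₀def
  refine ⟨((Real.exp E * (n / z - Real.log z) : ℝ) : ℂ) * S₀ + ((Real.exp E : ℝ) : ℂ) * d,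
    ((Real.exp E * Real.log z : ℝ) : ℂ) * S₀ + ((Real.exp E : ℝ) : ℂ) * (-d), ?_, ?_, ?_⟩
  · rw [hfun1]
    exact hE1.mul hS1
  · rw [hfun2]
    exact hE2.mul hS2
  · rw [hΦ z n]
    have hΦeq : (Real.exp ((n - z) * Real.log z + z) : ℂ) *
        (∑' l : ℕ, q ^ l / (l.factorial : ℂ) *
          Complex.Gamma ((z : ℂ) - (n : ℂ) + (k : ℂ) - 1/2 - (l : ℂ)))
        = ((Real.exp E : ℝ) : ℂ) * S₀ := by
      rw [hEdef, hS₀def]; rfl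
    rw [hΦeq]
    have hzc : (z : ℂ) ≠ 0 := by exact_mod_cast hz.ne'
    push_cast
    field_simp
    ring
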